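/- Let d ≥ 1, let h, h' > 0 and set h₀ := (√h + √h')². Let u : ℝ^d → [0,1] be measurable and Lebesgue integrable. Then ∫_{ℝ^d} u dx − ∫_{ℝ^d} u·(G_{h₀} ⋆ u) dx ≤ ( ∫_{ℝ^d} u dx − ∫_{ℝ^d} u·(G_h ⋆ u) dx ) + ( ∫_{ℝ^d} u dx − ∫_{ℝ^d} u·(G_{h'} ⋆ u) dx ). Equivalently, in terms of E_h(u) = (1/√h)·∫ (1−u)·(G_h ⋆ u) dx, one has √h₀·E_{h₀}(u) ≤ √h·E_h(u) + √h'·E_{h'}(u); in particular E_{h₀}(u) ≤ E_h(u) whenever h₀/h is the square of a positive integer. -/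

import Mathlib

open MeasureTheory

/-- The Gaussian heat kernel `G_h(z) = (2πh)^{-d/2} exp(-|z|²/(2h))` on `ℝ^d`. -/
noncomputable def gauss (d : ℕ) (h : ℝ) (z : EuclideanSpace ℝ (Fin d)) : ℝ :=
  (2 * Real.pi * h) ^ (-(d : ℝ) / 2) * Real.exp (-‖z‖ ^ 2 / (2 * h))

/-- Convolution of two functions on `ℝ^d` w.r.t. Lebesgue measure. -/
noncomputable def conv (d : ℕ) (f g : EuclideanSpace ℝ (Fin d) → ℝ)
    (x : EuclideanSpace ℝ (Fin d)) : ℝ :=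
  ∫ y, f (x - y) * g y

lemma gauss_nonneg {d : ℕ} {t : ℝ} (ht : 0 < t) (z : EuclideanSpace ℝ (Fin d)) :
    0 ≤ gauss d t z := by
  unfold gauss
  have : (0:ℝ) < 2 * Real.pi * t := by positivity
  positivity

lemma gauss_eq {d : ℕ} {t : ℝ} (ht : 0 < t) (z : EuclideanSpace ℝ (Fin d)) :
    gauss d t z = (2 * Real.pi * t) ^ (-(d : ℝ) / 2) * Real.exp (-(1/(2*t)) * ‖z‖ ^ 2) := by
  unfold gauss
  congr 1
  congr 1
  field_simp

lemma integrable_exp_norm {d : ℕ} {b : ℝ} (hb : 0 < b) :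
    Integrable (fun z : EuclideanSpace ℝ (Fin d) => Real.exp (-b * ‖z‖ ^ 2)) := by
  have h := GaussianFourier.integrable_cexp_neg_mul_sq_norm_add
    (V := EuclideanSpace ℝ (Fin d)) (b := (b:ℂ)) (by simpa using hb) 0 0
  have h2 := h.norm
  refine h2.congr (Filter.Eventually.of_forall fun z => ?_)
  simp [Complex.norm_exp]
  exact Or.inl (by norm_cast)

lemma gauss_integrable {d : ℕ} {t : ℝ} (ht : 0 < t) :
    Integrable (gauss d t) := by
  have : Integrable (fun z : EuclideanSpace ℝ (Fin d) =>
      Real.exp (-(1/(2*t)) * ‖z‖ ^ 2)) := integrable_exp_norm (by positivity)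
  have := this.const_mul ((2 * Real.pi * t) ^ (-(d : ℝ) / 2))
  exact this.congr (Filter.Eventually.of_forall fun z => (gauss_eq ht z).symm)

lemma gauss_integral {d : ℕ} {t : ℝ} (ht : 0 < t) :
    ∫ z : EuclideanSpace ℝ (Fin d), gauss d t z = 1 := by
  have h2t : (0:ℝ) < 2 * Real.pi * t := by positivity
  calc ∫ z : EuclideanSpace ℝ (Fin d), gauss d t z
      = (2 * Real.pi * t) ^ (-(d : ℝ) / 2) *
        ∫ z : EuclideanSpace ℝ (Fin d), Real.exp (-(1/(2*t)) * ‖z‖ ^ 2) := by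
        rw [← integral_const_mul]
        exact integral_congr_ae (Filter.Eventually.of_forall fun z => gauss_eq ht z)
    _ = 1 := by
        rw [GaussianFourier.integral_rexp_neg_mul_sq_norm (by positivity)]
        rw [finrank_euclideanSpace_fin]
        have : Real.pi / (1/(2*t)) = 2 * Real.pi * t := by field_simp
        rw [this, ← Real.rpow_add h2t,
          show (-(d:ℝ)/2 + (d:ℝ)/2) = 0 by ring, Real.rpow_zero]

noncomputable def corr (d : ℕ) (u : EuclideanSpace ℝ (Fin d) → ℝ)
    (v : EuclideanSpace ℝ (Fin d)) : ℝ :=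
  ∫ x, u x * u (x - v)

section corr
variable {d : ℕ} {u : EuclideanSpace ℝ (Fin d) → ℝ}
  (hu_meas : Measurable u) (hu_range : ∀ x, u x ∈ Set.Icc (0 : ℝ) 1)
  (hu_int : Integrable u)

include hu_meas hu_range hu_int

lemma integrable_mul_shift (v : EuclideanSpace ℝ (Fin d)) :
    Integrable (fun x => u x * u (x - v)) := by
  refine hu_int.mono ((hu_meas.mul (hu_meas.comp (measurable_id.sub measurable_const))).aestronglyMeasurable)
    (Filter.Eventually.of_forall fun x => ?_)
  have h1 := hu_range x
  have h2 := hu_range (x - v)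
  rw [Real.norm_eq_abs, Real.norm_eq_abs, abs_of_nonneg h1.1,
    abs_of_nonneg (mul_nonneg h1.1 h2.1)]
  exact mul_le_of_le_one_right h1.1 h2.2

lemma corr_nonneg (v : EuclideanSpace ℝ (Fin d)) : 0 ≤ corr d u v :=
  integral_nonneg fun x => mul_nonneg (hu_range x).1 (hu_range _).1

lemma corr_le (v : EuclideanSpace ℝ (Fin d)) : corr d u v ≤ ∫ x, u x :=
  integral_mono (integrable_mul_shift hu_meas hu_range hu_int v) hu_int
    (fun x => mul_le_of_le_one_right (hu_range x).1 (hu_range _).2)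

lemma corr_stronglyMeasurable : StronglyMeasurable (corr d u) := by
  have : StronglyMeasurable (fun p : EuclideanSpace ℝ (Fin d) × EuclideanSpace ℝ (Fin d) =>
      u p.2 * u (p.2 - p.1)) :=
    ((hu_meas.comp measurable_snd).mul
      (hu_meas.comp (measurable_snd.sub measurable_fst))).stronglyMeasurable
  exact this.integral_prod_right'

lemma corr_subadd (v w : EuclideanSpace ℝ (Fin d)) :
    corr d u v + corr d u w ≤ (∫ x, u x) + corr d u (v + w) := by
  have hw : corr d u w = ∫ x, u (x - v) * u (x - v - w) := by
    have := integral_sub_right_eq_self (μ := volume)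
      (fun x => u x * u (x - w)) v
    rw [corr, ← this]
  have hM : (∫ x, u x) = ∫ x, u (x - v) :=
    (integral_sub_right_eq_self (μ := volume) u v).symm
  have hvw : corr d u (v + w) = ∫ x, u x * u (x - v - w) := by
    rw [corr]
    congr 1 with x
    rw [sub_sub]
  have int1 := integrable_mul_shift hu_meas hu_range hu_int v
  have int2 : Integrable (fun x => u (x - v) * u (x - v - w)) := by
    have := (integrable_mul_shift hu_meas hu_range hu_int w).comp_sub_right v
    simpa using this
  have int3 : Integrable (fun x => u (x - v)) := hu_int.comp_sub_right v
  have int4 : Integrable (fun x => u x * u (x - v - w)) := by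
    have := integrable_mul_shift hu_meas hu_range hu_int (v + w)
    refine this.congr (Filter.Eventually.of_forall fun x => ?_)
    simp only [sub_sub]
  rw [hw, hM, hvw, corr, ← integral_add int1 int2, ← integral_add int3 int4]
  refine integral_mono (int1.add int2) (int3.add int4) fun x => ?_
  obtain ⟨ha, ha1⟩ := hu_range x
  obtain ⟨hb, hb1⟩ := hu_range (x - v)
  obtain ⟨hc, hc1⟩ := hu_range (x - v - w)
  nlinarith [mul_nonneg (mul_nonneg (sub_nonneg.2 hb1) ha) hc,
    mul_nonneg (mul_nonneg hb (sub_nonneg.2 ha1)) (sub_nonneg.2 hc1)]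

end corr

lemma gauss_measurable {d : ℕ} (t : ℝ) : Measurable (gauss d t) := by
  unfold gauss
  exact measurable_const.mul
    (Real.measurable_exp.comp ((measurable_norm.pow_const 2).neg.div_const _))

lemma gauss_smul {d : ℕ} {t : ℝ} (ht : 0 < t) (w : EuclideanSpace ℝ (Fin d)) :
    gauss d t (Real.sqrt t • w) = t ^ (-(d : ℝ) / 2) * gauss d 1 w := by
  unfold gauss
  have h1 : ‖Real.sqrt t • w‖ ^ 2 = t * ‖w‖ ^ 2 := by
    rw [norm_smul, Real.norm_eq_abs, abs_of_nonneg (Real.sqrt_nonneg t), mul_pow,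
      Real.sq_sqrt ht.le]
  have h2 : (2 * Real.pi * t) ^ (-(d : ℝ) / 2)
      = t ^ (-(d : ℝ) / 2) * (2 * Real.pi * 1) ^ (-(d : ℝ) / 2) := by
    rw [mul_one, mul_comm ((2:ℝ) * Real.pi) t, Real.mul_rpow ht.le (by positivity)]
  rw [h1, h2]
  have h3 : -(t * ‖w‖ ^ 2) / (2 * t) = -‖w‖ ^ 2 / (2 * 1) := by
    field_simp
  rw [h3]
  ring

section main
variable {d : ℕ} {u : EuclideanSpace ℝ (Fin d) → ℝ}
  (hu_meas : Measurable u) (hu_range : ∀ x, u x ∈ Set.Icc (0 : ℝ) 1)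
  (hu_int : Integrable u)

include hu_meas hu_range hu_int

lemma conv_eq (t : ℝ) (x : EuclideanSpace ℝ (Fin d)) :
    conv d (gauss d t) u x = ∫ z, gauss d t z * u (x - z) := by
  rw [conv, ← integral_sub_left_eq_self (μ := volume)
    (fun z => gauss d t z * u (x - z)) x]
  simp

lemma key_eq {t : ℝ} (ht : 0 < t) :
    ∫ x, u x * conv d (gauss d t) u x
      = ∫ w, gauss d 1 w * corr d u (Real.sqrt t • w) := by
  have hgm : Measurable (gauss d t) := gauss_measurable t
  have hFmeas : Measurable (fun p : EuclideanSpace ℝ (Fin d) × EuclideanSpace ℝ (Fin d) =>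
      u p.1 * (gauss d t p.2 * u (p.1 - p.2))) :=
    (hu_meas.comp measurable_fst).mul ((hgm.comp measurable_snd).mul
      (hu_meas.comp (measurable_fst.sub measurable_snd)))
  have h1 : ∀ x, Integrable (fun z => u x * (gauss d t z * u (x - z))) := by
    intro x
    refine (gauss_integrable ht).mono
      ((measurable_const.mul (hgm.mul
        (hu_meas.comp (measurable_const.sub measurable_id)))).aestronglyMeasurable)
      (Filter.Eventually.of_forall fun z => ?_)
    obtain ⟨ha, ha1⟩ := hu_range x
    obtain ⟨hc, hc1⟩ := hu_range (x - z)
    have hg := gauss_nonneg ht z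
    rw [Real.norm_eq_abs, Real.norm_eq_abs, abs_of_nonneg (by positivity),
      abs_of_nonneg hg]
    have h4 : gauss d t z * u (x - z) ≤ gauss d t z := mul_le_of_le_one_right hg hc1
    have h5 : u x * (gauss d t z * u (x - z)) ≤ gauss d t z * u (x - z) :=
      mul_le_of_le_one_left (mul_nonneg hg hc) ha1
    linarith
  have hFint : Integrable (Function.uncurry
      (fun x z => u x * (gauss d t z * u (x - z)))) ((volume : Measure (EuclideanSpace ℝ (Fin d))).prod volume) := by
    have huncurry : Function.uncurry (fun x z => u x * (gauss d t z * u (x - z)))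
        = fun p : EuclideanSpace ℝ (Fin d) × EuclideanSpace ℝ (Fin d) =>
          u p.1 * (gauss d t p.2 * u (p.1 - p.2)) := rfl
    rw [huncurry, integrable_prod_iff hFmeas.aestronglyMeasurable]
    refine ⟨Filter.Eventually.of_forall h1, ?_⟩
    have hC : (0:ℝ) ≤ ∫ z, gauss d t z := integral_nonneg (gauss_nonneg ht)
    refine (hu_int.const_mul (∫ z, gauss d t z)).mono
      (hFmeas.norm.stronglyMeasurable.integral_prod_right'.aestronglyMeasurable)
      (Filter.Eventually.of_forall fun x => ?_)
    obtain ⟨ha, ha1⟩ := hu_range x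
    have hb : ∫ z, ‖u x * (gauss d t z * u (x - z))‖ ≤ ∫ z, gauss d t z * u x := by
      refine integral_mono (h1 x).norm ((gauss_integrable ht).mul_const (u x))
        fun z => ?_
      obtain ⟨hc, hc1⟩ := hu_range (x - z)
      have hg := gauss_nonneg ht z
      rw [Real.norm_eq_abs, abs_of_nonneg (by positivity)]
      have h4 : gauss d t z * u (x - z) ≤ gauss d t z := mul_le_of_le_one_right hg hc1
      calc u x * (gauss d t z * u (x - z)) ≤ u x * gauss d t z :=
            mul_le_mul_of_nonneg_left h4 ha
        _ = gauss d t z * u x := mul_comm _ _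
    rw [Real.norm_eq_abs, Real.norm_eq_abs,
      abs_of_nonneg (integral_nonneg fun z => norm_nonneg _)]
    rw [integral_mul_const] at hb
    calc ∫ z, ‖u x * (gauss d t z * u (x - z))‖ ≤ (∫ z, gauss d t z) * u x := hb
      _ ≤ |(∫ z, gauss d t z) * u x| := le_abs_self _
  have step1 : ∫ x, u x * conv d (gauss d t) u x = ∫ z, gauss d t z * corr d u z := by
    calc ∫ x, u x * conv d (gauss d t) u x
        = ∫ x, ∫ z, u x * (gauss d t z * u (x - z)) := by
          congr 1 with x
          rw [conv_eq hu_meas hu_range hu_int, integral_const_mul]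
      _ = ∫ z, ∫ x, u x * (gauss d t z * u (x - z)) := integral_integral_swap hFint
      _ = ∫ z, gauss d t z * corr d u z := by
          congr 1 with z
          rw [corr, ← integral_const_mul]
          congr 1 with x
          ring
  have hs : (0:ℝ) ≤ Real.sqrt t := Real.sqrt_nonneg t
  have hscale := MeasureTheory.Measure.integral_comp_smul_of_nonneg (μ := volume)
    (fun z => gauss d t z * corr d u z) (Real.sqrt t) (hR := hs)
  rw [finrank_euclideanSpace_fin] at hscale
  have hpow : (Real.sqrt t) ^ d * t ^ (-(d : ℝ) / 2) = 1 := by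
    rw [← Real.rpow_natCast (Real.sqrt t) d, Real.sqrt_eq_rpow,
      ← Real.rpow_mul ht.le, ← Real.rpow_add ht,
      show ((1:ℝ)/2 * (d:ℝ) + -(d:ℝ)/2) = 0 by ring, Real.rpow_zero]
  have hst : ((Real.sqrt t) ^ d : ℝ) ≠ 0 := by positivity
  rw [step1]
  calc ∫ z, gauss d t z * corr d u z
      = (Real.sqrt t) ^ d *
        ∫ w, (fun z => gauss d t z * corr d u z) (Real.sqrt t • w) := by
        rw [hscale, smul_eq_mul, ← mul_assoc, mul_inv_cancel₀ hst, one_mul]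
    _ = (Real.sqrt t) ^ d *
        (t ^ (-(d : ℝ) / 2) * ∫ w, gauss d 1 w * corr d u (Real.sqrt t • w)) := by
        simp only [gauss_smul ht, mul_assoc]
        rw [integral_const_mul]
    _ = ∫ w, gauss d 1 w * corr d u (Real.sqrt t • w) := by
        rw [← mul_assoc, hpow, one_mul]

end main

theorem stmt_11 (d : ℕ) (hd : 1 ≤ d) (h h' : ℝ) (hh : 0 < h) (hh' : 0 < h')
    (h₀ : ℝ) (hh₀ : h₀ = (Real.sqrt h + Real.sqrt h') ^ 2)
    (u : EuclideanSpace ℝ (Fin d) → ℝ)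
    (hu_meas : Measurable u) (hu_range : ∀ x, u x ∈ Set.Icc (0 : ℝ) 1)
    (hu_int : Integrable u) :
    (∫ x, u x) - (∫ x, u x * conv d (gauss d h₀) u x)
      ≤ ((∫ x, u x) - ∫ x, u x * conv d (gauss d h) u x)
        + ((∫ x, u x) - ∫ x, u x * conv d (gauss d h') u x) := by
  have hh₀pos : 0 < h₀ := by
    rw [hh₀]
    have h1 : 0 < Real.sqrt h := Real.sqrt_pos.2 hh
    have h2 : 0 < Real.sqrt h' := Real.sqrt_pos.2 hh'
    positivity
  set M := ∫ x, u x with hM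
  have hMnonneg : 0 ≤ M := integral_nonneg fun x => (hu_range x).1
  have hsum : Real.sqrt h₀ = Real.sqrt h + Real.sqrt h' := by
    rw [hh₀, Real.sqrt_sq (by positivity)]
  -- integrability of w ↦ gauss 1 w * corr (s • w)
  have Ig : ∀ s : ℝ, Integrable (fun w => gauss d 1 w * corr d u (s • w)) := by
    intro s
    refine ((gauss_integrable one_pos).const_mul M).mono
      (((gauss_measurable 1).mul
        ((corr_stronglyMeasurable hu_meas hu_range hu_int).measurable.comp
          (measurable_const_smul s))).aestronglyMeasurable)
      (Filter.Eventually.of_forall fun w => ?_)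
    have hg := gauss_nonneg one_pos w
    have hc0 := corr_nonneg hu_meas hu_range hu_int (s • w)
    have hc1 := corr_le hu_meas hu_range hu_int (s • w)
    rw [Real.norm_eq_abs, Real.norm_eq_abs, abs_of_nonneg (by positivity),
      abs_of_nonneg (by positivity)]
    calc gauss d 1 w * corr d u (s • w) ≤ gauss d 1 w * M :=
          mul_le_mul_of_nonneg_left hc1 hg
      _ = M * gauss d 1 w := mul_comm _ _
  have IM : Integrable (fun w => gauss d 1 w * M) :=
    (gauss_integrable (d := d) one_pos).mul_const M
  have hMid : M = ∫ w : EuclideanSpace ℝ (Fin d), gauss d 1 w * M := by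
    rw [integral_mul_const, gauss_integral one_pos, one_mul]
  rw [key_eq hu_meas hu_range hu_int hh₀pos, key_eq hu_meas hu_range hu_int hh,
    key_eq hu_meas hu_range hu_int hh']
  have main : (∫ w, gauss d 1 w * corr d u (Real.sqrt h • w))
      + (∫ w, gauss d 1 w * corr d u (Real.sqrt h' • w))
      ≤ M + ∫ w, gauss d 1 w * corr d u (Real.sqrt h₀ • w) := by
    rw [← integral_add (Ig (Real.sqrt h)) (Ig (Real.sqrt h'))]
    rw [hMid, ← integral_add IM (Ig (Real.sqrt h₀))]
    refine integral_mono ((Ig (Real.sqrt h)).add (Ig (Real.sqrt h')))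
      (IM.add (Ig (Real.sqrt h₀))) fun w => ?_
    have hg := gauss_nonneg one_pos w
    have hsub := corr_subadd hu_meas hu_range hu_int
      (Real.sqrt h • w) (Real.sqrt h' • w)
    have hvw : Real.sqrt h₀ • w = Real.sqrt h • w + Real.sqrt h' • w := by
      rw [hsum, add_smul]
    rw [hvw]
    simp only
    nlinarith [mul_le_mul_of_nonneg_left hsub hg]
  linarith
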